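/- Let I_k = [(k−1)/4, k/4) for k = 1,2,3,4. Then the combined system E(I_1 ∪ I_3, 4ℤ ∪ (4ℤ+2)) ∪ E(I_2 ∪ I_4, (4ℤ+1) ∪ (4ℤ+3)) is not a Riesz basis for L²[0,1). -/

import Mathlib

open MeasureTheory Complex Real Set
open scoped Classical

noncomputable section

/-- Lebesgue measure restricted to `[0,1)`. -/
def μ01 : MeasureTheory.Measure ℝ := MeasureTheory.volume.restrict (Set.Ico (0:ℝ) 1)

/-- The Hilbert space `L²[0,1)` of complex square-integrable functions on `[0,1)`. -/
abbrev L2 : Type := MeasureTheory.Lp ℂ 2 μ01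

/-- A function on ℝ as an element of `L²[0,1)` (junk value `0` if not in `L²`). -/
def toL2 (f : ℝ → ℂ) : L2 :=
  if h : MeasureTheory.MemLp f 2 μ01 then h.toLp f else 0

/-- The function `x ↦ e^{2πiλx} · χ_S(x)` as an element of `L²[0,1)`. -/
def expChar (S : Set ℝ) (lam : ℝ) : L2 :=
  toL2 (S.indicator fun x => Complex.exp (2 * Real.pi * lam * x * Complex.I))

/-- `L²(S)` viewed as the subset of `L²[0,1)` of elements vanishing a.e. outside `S`. -/
def L2on (S : Set ℝ) : Set L2 := {g : L2 | ∀ᵐ x ∂μ01, x ∉ S → g x = 0}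

/-- A family is a Riesz sequence: there are `0 < A ≤ B` giving a two-sided ℓ²-norm
equivalence on (finite) linear combinations. -/
def IsRieszSequence {ι : Type*} (f : ι → L2) : Prop :=
  ∃ A B : ℝ, 0 < A ∧ A ≤ B ∧ ∀ c : ι →₀ ℂ,
    A * ∑ i ∈ c.support, ‖c i‖ ^ 2 ≤ ‖∑ i ∈ c.support, c i • f i‖ ^ 2 ∧
    ‖∑ i ∈ c.support, c i • f i‖ ^ 2 ≤ B * ∑ i ∈ c.support, ‖c i‖ ^ 2

/-- A family is a Riesz basis for the subspace of `L²[0,1)` given by the subset `V`: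
it is a Riesz sequence whose closed linear span is `V`. -/
def IsRieszBasis {ι : Type*} (f : ι → L2) (V : Set L2) : Prop :=
  IsRieszSequence f ∧ closure (↑(Submodule.span ℂ (Set.range f)) : Set L2) = V

/-! ### Auxiliary material for the proof -/

instance : IsFiniteMeasure μ01 := by
  constructor
  rw [μ01, Measure.restrict_apply MeasurableSet.univ, Set.univ_inter, Real.volume_Ico]
  norm_num

/-- The witness function `χ_{[0,1/4)} - χ_{[1/2,3/4)}`. -/
def wFun : ℝ → ℂ := fun x =>
  (Set.Ico (0:ℝ) (1/4)).indicator (fun _ => (1:ℂ)) x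
  - (Set.Ico (2/4:ℝ) (3/4)).indicator (fun _ => (1:ℂ)) x

lemma wFun_memℒp : MemLp wFun 2 μ01 := by
  refine MemLp.of_bound ?_ 2 ?_
  · exact ((measurable_const.indicator measurableSet_Ico).sub
      (measurable_const.indicator measurableSet_Ico)).aestronglyMeasurable
  · refine Filter.Eventually.of_forall fun x => ?_
    have h1 : ‖(Set.Ico (0:ℝ) (1/4)).indicator (fun _ => (1:ℂ)) x‖ ≤ 1 := by
      rw [Set.indicator_apply]; split_ifs <;> simp
    have h2 : ‖(Set.Ico (2/4:ℝ) (3/4)).indicator (fun _ => (1:ℂ)) x‖ ≤ 1 := by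
      rw [Set.indicator_apply]; split_ifs <;> simp
    calc ‖wFun x‖ ≤ _ + _ := norm_sub_le _ _
    _ ≤ 2 := by linarith

lemma eFun_norm (lam x : ℝ) : ‖Complex.exp (2 * Real.pi * lam * x * Complex.I)‖ = 1 := by
  have h : (2 * (Real.pi:ℂ) * lam * x * Complex.I)
      = ((2 * Real.pi * lam * x : ℝ) : ℂ) * Complex.I := by push_cast; ring
  rw [h, Complex.norm_exp_ofReal_mul_I]

lemma indicator_e_memℒp (S : Set ℝ) (hS : MeasurableSet S) (lam : ℝ) :
    MemLp (S.indicator fun x => Complex.exp (2 * Real.pi * lam * x * Complex.I)) 2 μ01 := by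
  refine MemLp.of_bound ?_ 1 (Filter.Eventually.of_forall fun x => ?_)
  · exact (Measurable.indicator (by fun_prop) hS).aestronglyMeasurable
  · calc ‖_‖ ≤ ‖Complex.exp (2 * Real.pi * lam * x * Complex.I)‖ :=
        norm_indicator_le_norm_self _ x
    _ = 1 := eFun_norm lam x

lemma inner_toL2 (f g : ℝ → ℂ) (hf : MemLp f 2 μ01) (hg : MemLp g 2 μ01) :
    (inner ℂ (toL2 f) (toL2 g) : ℂ) = ∫ x, (starRingEnd ℂ) (f x) * g x ∂μ01 := by
  rw [toL2, dif_pos hf, toL2, dif_pos hg, MeasureTheory.L2.inner_def]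
  refine integral_congr_ae ?_
  filter_upwards [hf.coeFn_toLp, hg.coeFn_toLp] with x h1 h2
  rw [h1, h2, RCLike.inner_apply']

lemma setInt (a b : ℝ) (ha : 0 ≤ a) (hb : b ≤ 1) (hab : a ≤ b) (f : ℝ → ℂ) :
    ∫ x in Set.Ico a b, f x ∂μ01 = ∫ x in a..b, f x := by
  rw [μ01, Measure.restrict_restrict measurableSet_Ico,
    Set.inter_eq_left.mpr (Set.Ico_subset_Ico ha hb),
    setIntegral_congr_set Ico_ae_eq_Ioc, intervalIntegral.integral_of_le hab]

lemma shiftInt (n : ℤ) (hn : Even n) :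
    ∫ x in (2/4:ℝ)..(3/4:ℝ), Complex.exp (2 * Real.pi * ((n:ℝ):ℝ) * x * Complex.I)
      = ∫ x in (0:ℝ)..(1/4:ℝ), Complex.exp (2 * Real.pi * ((n:ℝ):ℝ) * x * Complex.I) := by
  obtain ⟨m, rfl⟩ := hn
  have key := intervalIntegral.integral_comp_add_right
    (fun x : ℝ => Complex.exp (2 * Real.pi * (((m + m : ℤ):ℝ):ℝ) * x * Complex.I)) (1/2 : ℝ)
    (a := 0) (b := 1/4)
  rw [show (0:ℝ) + 1/2 = 2/4 by norm_num, show (1/4:ℝ) + 1/2 = 3/4 by norm_num] at key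
  rw [← key]
  refine intervalIntegral.integral_congr fun x _ => ?_
  show Complex.exp _ = Complex.exp _
  push_cast
  rw [show (2*(Real.pi:ℂ)*((m:ℂ)+(m:ℂ))*((x:ℂ)+1/2)*Complex.I)
      = 2*(Real.pi:ℂ)*((m:ℂ)+(m:ℂ))*(x:ℂ)*Complex.I + (m:ℂ)*(2*(Real.pi:ℂ)*Complex.I) by ring,
    Complex.exp_add, Complex.exp_int_mul_two_pi_mul_I, mul_one]

/-- The inner product of the witness with the first family vanishes. -/
lemma inner_w_family1 (n : ℤ) (hn : Even n) :
    (inner ℂ (toL2 wFun)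
      (expChar (Set.Ico (0 : ℝ) (1/4) ∪ Set.Ico (2/4 : ℝ) (3/4)) ((n:ℝ))) : ℂ) = 0 := by
  set E : ℝ → ℂ := fun x => Complex.exp (2 * Real.pi * ((n:ℝ)) * x * Complex.I) with hE
  have hSmeas : MeasurableSet (Set.Ico (0 : ℝ) (1/4) ∪ Set.Ico (2/4 : ℝ) (3/4)) :=
    measurableSet_Ico.union measurableSet_Ico
  rw [expChar, inner_toL2 _ _ wFun_memℒp (indicator_e_memℒp _ hSmeas _)]
  have hpt : ∀ x : ℝ, (starRingEnd ℂ) (wFun x) *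
      ((Set.Ico (0 : ℝ) (1/4) ∪ Set.Ico (2/4 : ℝ) (3/4)).indicator E) x
      = (Set.Ico (0:ℝ) (1/4)).indicator E x - (Set.Ico (2/4:ℝ) (3/4)).indicator E x := by
    intro x
    by_cases h1 : x ∈ Set.Ico (0:ℝ) (1/4) <;> by_cases h3 : x ∈ Set.Ico (2/4:ℝ) (3/4)
    · exfalso; simp only [Set.mem_Ico] at h1 h3; linarith [h1.2, h3.1]
    · have hu : x ∈ Set.Ico (0 : ℝ) (1/4) ∪ Set.Ico (2/4 : ℝ) (3/4) := Or.inl h1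
      simp only [wFun]
      rw [Set.indicator_of_mem h1 (fun _ => (1:ℂ)), Set.indicator_of_notMem h3 (fun _ => (1:ℂ)),
        Set.indicator_of_mem hu E, Set.indicator_of_mem h1 E, Set.indicator_of_notMem h3 E]
      simp
    · have hu : x ∈ Set.Ico (0 : ℝ) (1/4) ∪ Set.Ico (2/4 : ℝ) (3/4) := Or.inr h3
      simp only [wFun]
      rw [Set.indicator_of_notMem h1 (fun _ => (1:ℂ)), Set.indicator_of_mem h3 (fun _ => (1:ℂ)),
        Set.indicator_of_mem hu E, Set.indicator_of_notMem h1 E, Set.indicator_of_mem h3 E]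
      simp
    · have hu : x ∉ Set.Ico (0 : ℝ) (1/4) ∪ Set.Ico (2/4 : ℝ) (3/4) := by
        intro hx; rcases hx with hx | hx; exact h1 hx; exact h3 hx
      simp only [wFun]
      rw [Set.indicator_of_notMem h1 (fun _ => (1:ℂ)), Set.indicator_of_notMem h3 (fun _ => (1:ℂ)),
        Set.indicator_of_notMem hu E, Set.indicator_of_notMem h1 E, Set.indicator_of_notMem h3 E]
      simp
  rw [integral_congr_ae (Filter.Eventually.of_forall hpt)]
  have hi1 : Integrable ((Set.Ico (0:ℝ) (1/4)).indicator E) μ01 :=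
    (indicator_e_memℒp _ measurableSet_Ico _).integrable one_le_two
  have hi3 : Integrable ((Set.Ico (2/4:ℝ) (3/4)).indicator E) μ01 :=
    (indicator_e_memℒp _ measurableSet_Ico _).integrable one_le_two
  rw [integral_sub hi1 hi3, integral_indicator measurableSet_Ico,
    integral_indicator measurableSet_Ico,
    setInt 0 (1/4) (by norm_num) (by norm_num) (by norm_num),
    setInt (2/4) (3/4) (by norm_num) (by norm_num) (by norm_num),
    shiftInt n hn, sub_self]

/-- The inner product of the witness with the second family vanishes. -/
lemma inner_w_family2 (lam : ℝ) :
    (inner ℂ (toL2 wFun)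
      (expChar (Set.Ico (1/4 : ℝ) (2/4) ∪ Set.Ico (3/4 : ℝ) 1) lam) : ℂ) = 0 := by
  set E : ℝ → ℂ := fun x => Complex.exp (2 * Real.pi * lam * x * Complex.I) with hE
  have hSmeas : MeasurableSet (Set.Ico (1/4 : ℝ) (2/4) ∪ Set.Ico (3/4 : ℝ) 1) :=
    measurableSet_Ico.union measurableSet_Ico
  rw [expChar, inner_toL2 _ _ wFun_memℒp (indicator_e_memℒp _ hSmeas _)]
  have hpt : ∀ x : ℝ, (starRingEnd ℂ) (wFun x) *
      ((Set.Ico (1/4 : ℝ) (2/4) ∪ Set.Ico (3/4 : ℝ) 1).indicator E) x = 0 := by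
    intro x
    by_cases hu : x ∈ Set.Ico (1/4 : ℝ) (2/4) ∪ Set.Ico (3/4 : ℝ) 1
    · have hw : wFun x = 0 := by
        have h1 : x ∉ Set.Ico (0:ℝ) (1/4) := by
          intro hx
          simp only [Set.mem_Ico, Set.mem_union] at hx hu
          rcases hu with h | h <;> linarith [hx.2, h.1]
        have h3 : x ∉ Set.Ico (2/4:ℝ) (3/4) := by
          intro hx
          simp only [Set.mem_Ico, Set.mem_union] at hx hu
          rcases hu with h | h <;> linarith [hx.1, hx.2, h.1, h.2]
        simp only [wFun]
        rw [Set.indicator_of_notMem h1, Set.indicator_of_notMem h3, sub_zero]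
      rw [hw, map_zero, zero_mul]
    · rw [Set.indicator_of_notMem hu, mul_zero]
  rw [integral_congr_ae (Filter.Eventually.of_forall hpt), integral_zero]

/-- The witness is nonzero in `L²[0,1)`. -/
lemma toL2_wFun_ne_zero : toL2 wFun ≠ 0 := by
  intro h
  rw [toL2, dif_pos wFun_memℒp] at h
  have hae : wFun =ᵐ[μ01] 0 := by
    have h1 := wFun_memℒp.coeFn_toLp
    rw [h] at h1
    exact (Lp.coeFn_zero ℂ 2 μ01).symm.trans h1 |>.symm
  have hnull : μ01 {x | wFun x ≠ 0} = 0 := by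
    have := hae
    rw [Filter.EventuallyEq, ae_iff] at this
    simpa using this
  have hsub : Set.Ico (0:ℝ) (1/4) ⊆ {x | wFun x ≠ 0} := by
    intro x hx
    have h3 : x ∉ Set.Ico (2/4:ℝ) (3/4) := by
      intro hx3
      simp only [Set.mem_Ico] at hx hx3
      linarith [hx.2, hx3.1]
    show wFun x ≠ 0
    simp only [wFun]
    rw [Set.indicator_of_mem hx, Set.indicator_of_notMem h3]
    norm_num
  have hμ : μ01 (Set.Ico (0:ℝ) (1/4)) = 0 := measure_mono_null hsub hnull
  rw [μ01, Measure.restrict_apply measurableSet_Ico,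
    Set.inter_eq_left.mpr (Set.Ico_subset_Ico le_rfl (by norm_num)),
    Real.volume_Ico] at hμ
  norm_num at hμ

/-- With `I_k = [(k−1)/4, k/4)`, the combined system
`E(I_1 ∪ I_3, 4ℤ ∪ (4ℤ+2)) ∪ E(I_2 ∪ I_4, (4ℤ+1) ∪ (4ℤ+3))` is not a Riesz basis for
`L²[0,1)`. -/
theorem stmt_17 :
    ¬ IsRieszBasis
        (Sum.elim
          (fun l : {n : ℤ // n % 4 = 0 ∨ n % 4 = 2} =>
            expChar (Set.Ico (0 : ℝ) (1/4) ∪ Set.Ico (2/4 : ℝ) (3/4)) (((l : ℤ) : ℝ)))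
          (fun l : {n : ℤ // n % 4 = 1 ∨ n % 4 = 3} =>
            expChar (Set.Ico (1/4 : ℝ) (2/4) ∪ Set.Ico (3/4 : ℝ) 1) (((l : ℤ) : ℝ))))
        Set.univ := by
  rintro ⟨-, hspan⟩
  set v : L2 := toL2 wFun with hv
  set F := (Sum.elim
          (fun l : {n : ℤ // n % 4 = 0 ∨ n % 4 = 2} =>
            expChar (Set.Ico (0 : ℝ) (1/4) ∪ Set.Ico (2/4 : ℝ) (3/4)) (((l : ℤ) : ℝ)))
          (fun l : {n : ℤ // n % 4 = 1 ∨ n % 4 = 3} =>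
            expChar (Set.Ico (1/4 : ℝ) (2/4) ∪ Set.Ico (3/4 : ℝ) 1) (((l : ℤ) : ℝ)))) with hF
  have hrange : Set.range F ⊆ (LinearMap.ker (innerSL ℂ v : L2 →ₗ[ℂ] ℂ) : Set L2) := by
    rintro _ ⟨i, rfl⟩
    rcases i with l | l
    · have heven : Even (l : ℤ) := by
        rw [Int.even_iff]
        rcases l.2 with h | h <;> omega
      simpa [hF, innerSL_apply_apply] using inner_w_family1 (l : ℤ) heven
    · simpa [hF, innerSL_apply_apply] using inner_w_family2 (((l : ℤ) : ℝ))
  have hspan_ker : (Submodule.span ℂ (Set.range F) : Set L2)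
      ⊆ (LinearMap.ker (innerSL ℂ v : L2 →ₗ[ℂ] ℂ) : Set L2) := by
    exact_mod_cast Submodule.span_le.mpr hrange
  have hclosure : closure (↑(Submodule.span ℂ (Set.range F)) : Set L2)
      ⊆ (LinearMap.ker (innerSL ℂ v : L2 →ₗ[ℂ] ℂ) : Set L2) :=
    closure_minimal hspan_ker (ContinuousLinearMap.isClosed_ker _)
  rw [hspan] at hclosure
  have hvker : v ∈ LinearMap.ker (innerSL ℂ v : L2 →ₗ[ℂ] ℂ) := hclosure (Set.mem_univ v)
  have : (inner ℂ v v : ℂ) = 0 := by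
    have := LinearMap.mem_ker.mp hvker
    simpa using this
  exact toL2_wFun_ne_zero (inner_self_eq_zero.mp this)
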